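/- arXiv:2108.10725 — 2 statements merged into one kernel-verified Lean document; each statement's English description precedes it below -/
import Mathlib

section
/- Let σ, ν, μ be Minkowski velocities with ⟨ν,σ⟩ > 0, ⟨μ,σ⟩ > 0 and ⟨μ,ν⟩ > 0. Set ω₀₁ := ω(σ,ν), ω₀₂ := ω(σ,μ) and γ₀₁ := 1/√(1 + ⟨ω₀₁,ω₀₁⟩/c²). Then the 4D Einstein subtraction of these binary velocities, ε := [ω₀₂ − ω₀₁ + (γ₀₁/(γ₀₁+1))·((⟨ω₀₁,ω₀₁⟩/c²)·ω₀₂ − (⟨ω₀₂,ω₀₁⟩/c²)·ω₀₁)] / (1 + ⟨ω₀₂,ω₀₁⟩/c²), satisfies ε = (c²/⟨μ,ν⟩)·[μ − (⟨μ,ν+σ⟩/⟨σ,ν+σ⟩)·(ν + σ)] + σ. -/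
noncomputable section

/-- Minkowski bilinear form on ℝ⁴ with signature +−−−. -/
def mink (u v : Fin 4 → ℝ) : ℝ := u 0 * v 0 - u 1 * v 1 - u 2 * v 2 - u 3 * v 3

/-- Canonical (Oziewicz–Świerk–Bolós) binary relative velocity of μ with respect to ν. -/
def omegaBin (c : ℝ) (ν μ : Fin 4 → ℝ) : Fin 4 → ℝ := (c ^ 2 / mink ν μ) • μ - ν

lemma mink_comm (u v : Fin 4 → ℝ) : mink u v = mink v u := by
  simp only [mink]; ring

lemma mink_expand (s t : ℝ) (u v w z : Fin 4 → ℝ) :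
    mink (s • u - v) (t • w - z)
      = s * t * mink u w - s * mink u z - t * mink v w + mink v z := by
  simp only [mink, Pi.sub_apply, Pi.smul_apply, smul_eq_mul]; ring

lemma mink_add_right (u v w : Fin 4 → ℝ) :
    mink u (v + w) = mink u v + mink u w := by
  simp only [mink, Pi.add_apply]; ring

theorem einstein_oziewicz_velocity (c : ℝ) (hc : 0 < c) (σ ν μ : Fin 4 → ℝ)
    (hσ : mink σ σ = c ^ 2) (hν : mink ν ν = c ^ 2) (hμ : mink μ μ = c ^ 2)
    (hνσ : 0 < mink ν σ) (hμσ : 0 < mink μ σ) (hμν : 0 < mink μ ν)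
    (ω01 ω02 : Fin 4 → ℝ)
    (hω01 : ω01 = omegaBin c σ ν) (hω02 : ω02 = omegaBin c σ μ)
    (γ01 : ℝ) (hγ01 : γ01 = 1 / Real.sqrt (1 + mink ω01 ω01 / c ^ 2))
    (ε : Fin 4 → ℝ)
    (hε : ε = (1 + mink ω02 ω01 / c ^ 2)⁻¹ •
        (ω02 - ω01 + (γ01 / (γ01 + 1)) •
          ((mink ω01 ω01 / c ^ 2) • ω02 - (mink ω02 ω01 / c ^ 2) • ω01))) :
    ε = (c ^ 2 / mink μ ν) •
          (μ - (mink μ (ν + σ) / mink σ (ν + σ)) • (ν + σ)) + σ := by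
  have hc2 : (c : ℝ) ^ 2 ≠ 0 := by positivity
  have hA : mink ν σ ≠ 0 := hνσ.ne'
  have hB : mink μ σ ≠ 0 := hμσ.ne'
  have hD : mink μ ν ≠ 0 := hμν.ne'
  have hAc : mink ν σ + c ^ 2 ≠ 0 := by positivity
  have hσν : mink σ ν = mink ν σ := mink_comm σ ν
  have hσμ : mink σ μ = mink μ σ := mink_comm σ μ
  subst hω01 hω02
  simp only [omegaBin, hσν, hσμ] at hγ01 hε ⊢
  have e1 : mink ((c ^ 2 / mink ν σ) • ν - σ) ((c ^ 2 / mink ν σ) • ν - σ)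
      = c ^ 6 / (mink ν σ) ^ 2 - c ^ 2 := by
    rw [mink_expand, hν, hσ, hσν]
    field_simp
    ring
  have e2 : mink ((c ^ 2 / mink μ σ) • μ - σ) ((c ^ 2 / mink ν σ) • ν - σ)
      = c ^ 4 * mink μ ν / (mink μ σ * mink ν σ) - c ^ 2 := by
    rw [mink_expand, hσ, hσν]
    field_simp
    ring
  have eγ : γ01 = mink ν σ / c ^ 2 := by
    rw [hγ01, e1]
    have h1 : 1 + (c ^ 6 / mink ν σ ^ 2 - c ^ 2) / c ^ 2 = (c ^ 2 / mink ν σ) ^ 2 := by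
      field_simp; ring
    rw [h1, Real.sqrt_sq (by positivity)]
    field_simp
  rw [hε, e1, e2, eγ, mink_add_right, mink_add_right, hσν, hσ]
  funext i
  simp only [Pi.add_apply, Pi.sub_apply, Pi.smul_apply, smul_eq_mul]
  have hbd : mink μ ν + mink μ σ ≠ 0 := by positivity
  have key : 1 + (c ^ 4 * mink μ ν / (mink μ σ * mink ν σ) - c ^ 2) / c ^ 2
      = c ^ 2 * mink μ ν / (mink μ σ * mink ν σ) := by
    field_simp; ring
  rw [key]
  have hγ1 : mink ν σ / c ^ 2 + 1 ≠ 0 := by positivity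
  field_simp
  ring
end
end

section
/- Let σ, ν, μ be Minkowski velocities with ⟨μ,ν⟩ ≠ 0 and ⟨σ,ν+σ⟩ ≠ 0, and define the Einstein–Oziewicz relative velocity ε := (c²/⟨μ,ν⟩)·[μ − (⟨μ,ν+σ⟩/⟨σ,ν+σ⟩)·(ν + σ)] + σ. Then ⟨ε,ε⟩ = c⁶/⟨μ,ν⟩² − c². -/
noncomputable section

lemma mink_add_left (u v w : Fin 4 → ℝ) : mink (u + v) w = mink u w + mink v w := by
  simp only [mink, Pi.add_apply]; ring

lemma mink_sub_right (u v w : Fin 4 → ℝ) : mink u (v - w) = mink u v - mink u w := by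
  simp only [mink, Pi.sub_apply]; ring

lemma mink_sub_left (u v w : Fin 4 → ℝ) : mink (u - v) w = mink u w - mink v w := by
  simp only [mink, Pi.sub_apply]; ring

lemma mink_smul_right (r : ℝ) (u v : Fin 4 → ℝ) : mink u (r • v) = r * mink u v := by
  simp only [mink, Pi.smul_apply, smul_eq_mul]; ring

lemma mink_smul_left (r : ℝ) (u v : Fin 4 → ℝ) : mink (r • u) v = r * mink u v := by
  simp only [mink, Pi.smul_apply, smul_eq_mul]; ring

theorem einstein_oziewicz_norm (c : ℝ) (hc : 0 < c) (σ ν μ : Fin 4 → ℝ)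
    (hσ : mink σ σ = c ^ 2) (hν : mink ν ν = c ^ 2) (hμ : mink μ μ = c ^ 2)
    (hμν : mink μ ν ≠ 0) (hσνσ : mink σ (ν + σ) ≠ 0)
    (ε : Fin 4 → ℝ)
    (hε : ε = (c ^ 2 / mink μ ν) •
        (μ - (mink μ (ν + σ) / mink σ (ν + σ)) • (ν + σ)) + σ) :
    mink ε ε = c ^ 6 / (mink μ ν) ^ 2 - c ^ 2 := by
  have hd : mink σ (ν + σ) = mink ν σ + c ^ 2 := by
    rw [mink_add_right, hσ, mink_comm σ ν]
  have hνμ : mink ν μ = mink μ ν := mink_comm ν μ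
  have hσμ : mink σ μ = mink μ σ := mink_comm σ μ
  have hσν : mink σ ν = mink ν σ := mink_comm σ ν
  rw [hε]
  simp only [mink_add_right, mink_add_left, mink_sub_right, mink_sub_left,
    mink_smul_right, mink_smul_left, hd, hσ, hν, hμ, hνμ, hσμ, hσν]
  rw [hd] at hσνσ
  field_simp
  ring
end
end
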